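/- Let G be a group, S a T_s-set of sequences in G with associated finest topology τ_S, and p : (G, τ_S) → (X, σ) a group homomorphism into a topological group. Then p is continuous if and only if p(u_n) converges to the identity of X for every sequence (u_n) ∈ S. -/

import Mathlib

open Filter Topology Pointwise

/-- `u` converges to the identity in the group topology `t`. -/
def TendstoOne {G : Type*} [Group G] (t : GroupTopology G) (u : ℕ → G) : Prop :=
  Filter.Tendsto u Filter.atTop (@nhds G t.toTopologicalSpace 1)

/-- The group topology `t` is Hausdorff. -/
def IsHausdorffGT {G : Type*} [Group G] (t : GroupTopology G) : Prop :=
  @T2Space G t.toTopologicalSpace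

/-- `S` is a `T_s`-set of sequences: some Hausdorff group topology makes every
sequence of `S` converge to the identity. -/
def IsTsSet {G : Type*} [Group G] (S : Set (ℕ → G)) : Prop :=
  ∃ t : GroupTopology G, IsHausdorffGT t ∧ ∀ u ∈ S, TendstoOne t u

/-- `τ` is the finest Hausdorff group topology on `G` in which every sequence of `S`
converges to the identity (recall that in Mathlib's order on topologies, finer = smaller). -/
def IsTauS {G : Type*} [Group G] (S : Set (ℕ → G)) (τ : GroupTopology G) : Prop :=
  IsHausdorffGT τ ∧ (∀ u ∈ S, TendstoOne τ u) ∧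
    ∀ t : GroupTopology G, IsHausdorffGT t → (∀ u ∈ S, TendstoOne t u) → τ ≤ t

/-- The given topological-group structure on `G`, as a term of `GroupTopology G`. -/
def ambientGT (G : Type*) [Group G] [τ : TopologicalSpace G] [h : IsTopologicalGroup G] :
    GroupTopology G := ⟨τ, h⟩

/-- The set of all sequences converging to the identity in a group topology. -/
def SeqConvOne {G : Type*} [Group G] (t : GroupTopology G) : Set (ℕ → G) :=
  {u | TendstoOne t u}

/-- `(G, τ)` is an `s`-group: its topology is the finest Hausdorff group topology in which
every member of some `T_s`-set of sequences converges to the identity. -/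
def IsSGroup (G : Type*) [Group G] [TopologicalSpace G] [IsTopologicalGroup G] [T2Space G] :
    Prop :=
  ∃ S : Set (ℕ → G), IsTauS S (ambientGT G)

/-- for a `T_s`-set `S` in `G` with finest topology `τ_S`, a homomorphism
`p : (G, τ_S) → (X, σ)` into a topological group is continuous iff `p (u n) → 1` in `X`
for every sequence `u ∈ S`. -/
theorem stmt4 {G X : Type*} [Group G] [Group X] [TopologicalSpace X] [IsTopologicalGroup X]
    (S : Set (ℕ → G)) (τS : GroupTopology G) (hτS : IsTauS S τS) (p : G →* X) :
    @Continuous G X τS.toTopologicalSpace _ p ↔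
      ∀ u ∈ S, Filter.Tendsto (fun n => p (u n)) Filter.atTop (nhds (1 : X)) := by
  constructor
  · intro hc u hu
    have h1 := hτS.2.1 u hu
    have := (@Continuous.tendsto G X τS.toTopologicalSpace _ _ hc 1).comp h1
    simpa [Function.comp_def] using this
  · intro h
    -- induced group topology on G via p
    let i : GroupTopology G := ⟨TopologicalSpace.induced p ‹TopologicalSpace X›,
      topologicalGroup_induced p⟩
    have key : τS ≤ τS ⊓ i := by
      apply hτS.2.2
      · show @T2Space G (τS ⊓ i).toTopologicalSpace
        rw [GroupTopology.toTopologicalSpace_inf]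
        exact t2Space_antitone inf_le_left hτS.1
      · intro u hu
        show Filter.Tendsto u Filter.atTop (@nhds G (τS ⊓ i).toTopologicalSpace 1)
        rw [GroupTopology.toTopologicalSpace_inf, _root_.nhds_inf, Filter.tendsto_inf]
        refine ⟨hτS.2.1 u hu, ?_⟩
        show Filter.Tendsto u Filter.atTop (@nhds G (TopologicalSpace.induced p _) 1)
        rw [nhds_induced, Filter.tendsto_comap_iff]
        simpa [Function.comp_def] using h u hu
    have hle : τS.toTopologicalSpace ≤ TopologicalSpace.induced p ‹TopologicalSpace X› :=
      GroupTopology.toTopologicalSpace_le.2 (key.trans inf_le_right)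
    exact continuous_iff_le_induced.2 hle
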